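/- Let p > 3 and q be distinct primes, let a be a positive integer with gcd(a, p) = 1, let m₂ ≥ 0 and s ≥ 0 be integers, let t ≥ 1 be an integer, and let ε ∈ {1, −1}. If 2^((p−1)/2) · p^s · q^t = ε · Σ_{j=0}^{(p−1)/2} C(p, 2j+1) · a^(p−1−2j) · p^(2·j·m₂) · (−p)^j, then s = 1 and q^t ≡ 1 (mod p) or q^t ≡ −1 (mod p). -/

import Mathlib

theorem descent_d_eq_p
    (p q : ℕ) (hp : p.Prime) (hq : q.Prime) (hp3 : 3 < p) (hpq : p ≠ q)
    (a : ℕ) (ha : 0 < a) (hap : Nat.gcd a p = 1)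
    (m₂ s t : ℕ) (ht : 1 ≤ t)
    (ε : ℤ) (hε : ε = 1 ∨ ε = -1)
    (heq : (2 : ℤ) ^ ((p - 1) / 2) * (p : ℤ) ^ s * (q : ℤ) ^ t =
      ε * ∑ j ∈ Finset.range ((p - 1) / 2 + 1),
        (p.choose (2 * j + 1) : ℤ) * (a : ℤ) ^ (p - 1 - 2 * j) *
          (p : ℤ) ^ (2 * j * m₂) * (-(p : ℤ)) ^ j) :
    s = 1 ∧ ((q : ℤ) ^ t ≡ 1 [ZMOD p] ∨ (q : ℤ) ^ t ≡ -1 [ZMOD p]) := by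
  haveI : Fact p.Prime := ⟨hp⟩
  set n := (p - 1) / 2 with hn
  have hpodd : Odd p := hp.odd_of_ne_two (by omega)
  have h2n : 2 * n = p - 1 := by
    obtain ⟨k, hk⟩ := hpodd; omega
  have hn2 : 2 ≤ n := by omega
  -- split off the j = 0 term
  set f : ℕ → ℤ := fun j =>
    (p.choose (2 * j + 1) : ℤ) * (a : ℤ) ^ (p - 1 - 2 * j) *
      (p : ℤ) ^ (2 * j * m₂) * (-(p : ℤ)) ^ j with hf
  have hsplit : ∑ j ∈ Finset.range (n + 1), f j
      = (∑ i ∈ Finset.range n, f (i + 1)) + f 0 := Finset.sum_range_succ' f n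
  have hf0 : f 0 = (p : ℤ) * (a : ℤ) ^ (p - 1) := by
    simp [hf, Nat.choose_one_right]
  -- the rest is divisible by p^2
  have hdvd : ((p : ℤ))^2 ∣ ∑ i ∈ Finset.range n, f (i + 1) := by
    apply Finset.dvd_sum
    intro i hi
    rcases Nat.eq_zero_or_pos i with h0 | h1
    · subst h0
      have h3 : (p : ℤ) ∣ (p.choose 3 : ℤ) := by
        exact_mod_cast Int.natCast_dvd_natCast.mpr
          (hp.dvd_choose_self (by norm_num) (by omega))
      obtain ⟨c, hc⟩ := h3
      refine ⟨-(c * (a:ℤ) ^ (p - 1 - 2 * (0 + 1)) * (p:ℤ) ^ (2 * (0 + 1) * m₂)), ?_⟩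
      simp only [hf]
      rw [show 2 * (0 + 1) + 1 = 3 from rfl, hc]
      ring
    · have : ((p:ℤ))^2 ∣ (-(p:ℤ)) ^ (i + 1) := by
        have : i + 1 = 2 + (i - 1) := by omega
        rw [this, pow_add]
        exact Dvd.dvd.mul_right (by rw [neg_pow]; exact ⟨(-1)^2, by ring⟩) _
      exact Dvd.dvd.mul_left this _
  obtain ⟨R, hR⟩ := hdvd
  set B : ℤ := (a : ℤ) ^ (p - 1) + (p : ℤ) * R with hB
  have hSB : ∑ j ∈ Finset.range (n + 1), f j = (p : ℤ) * B := by
    rw [hsplit, hR, hf0, hB]; ring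
  have hE : (2 : ℤ) ^ n * (p : ℤ) ^ s * (q : ℤ) ^ t = ε * ((p : ℤ) * B) := by
    rw [← hSB]; exact heq
  have hp0 : (p : ℤ) ≠ 0 := by exact_mod_cast hp.pos.ne'
  have hppr : Prime (p : ℤ) := Nat.prime_iff_prime_int.mp hp
  -- p does not divide a
  have hpa : ¬ (p : ℤ) ∣ (a : ℤ) := by
    intro h
    have h' : p ∣ a := Int.natCast_dvd_natCast.mp h
    have := Nat.dvd_gcd h' (dvd_refl p)
    rw [hap] at this
    exact hp.one_lt.ne' (Nat.dvd_one.mp this)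
  -- p does not divide B
  have hpB : ¬ (p : ℤ) ∣ B := by
    intro h
    have : (p : ℤ) ∣ (a : ℤ) ^ (p - 1) := by
      have := dvd_sub h (Dvd.intro R rfl)
      simpa [hB] using this
    exact hpa (hppr.dvd_of_dvd_pow this)
  -- p does not divide 2^n * q^t
  have hp2q : ¬ (p : ℤ) ∣ (2 : ℤ) ^ n * (q : ℤ) ^ t := by
    intro h
    rcases hppr.dvd_mul.mp h with h | h
    · have h2 : p ∣ 2 := Int.natCast_dvd_natCast.mp (hppr.dvd_of_dvd_pow h)
      have := Nat.le_of_dvd (by norm_num) h2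
      omega
    · have h' : p ∣ q := Int.natCast_dvd_natCast.mp (hppr.dvd_of_dvd_pow h)
      exact hpq ((Nat.prime_dvd_prime_iff_eq hp hq).mp h')
  -- p does not divide ε * B
  have hpεB : ¬ (p : ℤ) ∣ ε * B := by
    rcases hε with h | h <;> subst h <;> simpa using hpB
  -- s ≥ 1
  have hs1 : 1 ≤ s := by
    by_contra h
    have hs0 : s = 0 := by omega
    subst hs0
    apply hp2q
    rw [show (2:ℤ)^n * (q:ℤ)^t = (2:ℤ)^n * (p:ℤ)^0 * (q:ℤ)^t by ring, hE]
    exact Dvd.intro (ε * B) (by ring)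
  obtain ⟨s', hs'⟩ : ∃ s', s = s' + 1 := ⟨s - 1, by omega⟩
  subst hs'
  have hE1 : (2 : ℤ) ^ n * (p : ℤ) ^ s' * (q : ℤ) ^ t = ε * B := by
    apply mul_left_cancel₀ hp0
    rw [show (p:ℤ) * ((2:ℤ)^n * (p:ℤ)^s' * (q:ℤ)^t)
        = (2:ℤ)^n * (p:ℤ)^(s'+1) * (q:ℤ)^t by ring, hE]
    ring
  have hs'0 : s' = 0 := by
    by_contra h
    apply hpεB
    rw [← hE1]
    obtain ⟨s'', hs''⟩ : ∃ s'', s' = s'' + 1 := ⟨s' - 1, by omega⟩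
    exact ⟨(2:ℤ)^n * (p:ℤ)^s'' * (q:ℤ)^t, by rw [hs'']; ring⟩
  subst hs'0
  refine ⟨rfl, ?_⟩
  -- now work in ZMod p
  have hE2 : (2 : ℤ) ^ n * (q : ℤ) ^ t = ε * B := by
    rw [← hE1]; ring
  have hcast : (2 : ZMod p) ^ n * ((q : ℤ) ^ t : ℤ) = (ε : ZMod p) * (B : ZMod p) := by
    have := congrArg (fun z : ℤ => (z : ZMod p)) hE2
    push_cast at this ⊢
    exact this
  have haz : (a : ZMod p) ≠ 0 := by
    intro h
    exact hpa (Int.natCast_dvd_natCast.mpr ((ZMod.natCast_eq_zero_iff a p).mp h))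
  have hB1 : (B : ZMod p) = 1 := by
    have : (B : ZMod p) = (a : ZMod p) ^ (p - 1) := by
      rw [hB]; push_cast; simp
    rw [this, ZMod.pow_card_sub_one_eq_one haz]
  have h2z : (2 : ZMod p) ≠ 0 := by
    intro h
    have h2 : ((2 : ℕ) : ZMod p) = 0 := by push_cast; exact h
    have := Nat.le_of_dvd (by norm_num) ((ZMod.natCast_eq_zero_iff 2 p).mp h2)
    omega
  have hx2 : ((2 : ZMod p) ^ n) ^ 2 = 1 := by
    rw [← pow_mul, mul_comm n 2, h2n, ZMod.pow_card_sub_one_eq_one h2z]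
  have hx : (2 : ZMod p) ^ n = 1 ∨ (2 : ZMod p) ^ n = -1 := by
    have h : ((2 : ZMod p) ^ n - 1) * ((2 : ZMod p) ^ n + 1) = 0 := by
      linear_combination hx2
    rcases mul_eq_zero.mp h with h | h
    · exact Or.inl (sub_eq_zero.mp h)
    · exact Or.inr (eq_neg_of_add_eq_zero_left h)
  have hqt : (((q : ℤ) ^ t : ℤ) : ZMod p) = 1 ∨ (((q : ℤ) ^ t : ℤ) : ZMod p) = -1 := by
    rw [hB1, mul_one] at hcast
    rcases hε with hε | hε <;> subst hε <;> rcases hx with hx | hx <;>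
      rw [hx] at hcast <;>
      first
        | (left; linear_combination hcast)
        | (left; linear_combination -hcast)
        | (right; linear_combination hcast)
        | (right; linear_combination -hcast)
  rcases hqt with h | h
  · left
    rw [Int.ModEq]
    have := (ZMod.intCast_eq_intCast_iff ((q:ℤ)^t) 1 p).mp (by push_cast at h ⊢; exact h)
    exact this
  · right
    exact (ZMod.intCast_eq_intCast_iff ((q:ℤ)^t) (-1) p).mp (by push_cast at h ⊢; exact h)
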